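/- Let (A,m) be an irreducible multiarrangement in K^ℓ with multiplicity function m: A → Z_{>0} not identically 1. Then every nonzero homogeneous derivation θ ∈ D(A,m) has polynomial degree at least 2. -/

import Mathlib

open scoped Classical
open MvPolynomial

namespace ArrPaper

variable {K : Type*} [Field K] {ℓ : ℕ}

/-- The coordinate ring `S = K[x₁,…,x_ℓ]`. -/
noncomputable abbrev S (K : Type*) [Field K] (ℓ : ℕ) := MvPolynomial (Fin ℓ) K

/-- The linear form associated to a covector `c`. -/
noncomputable def linForm (c : Fin ℓ → K) : S K ℓ :=
  ∑ i, MvPolynomial.C (c i) * MvPolynomial.X i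

/-- The linear functional associated to a covector. -/
noncomputable def toFunc (c : Fin ℓ → K) : (Fin ℓ → K) →ₗ[K] K :=
  ∑ i, c i • LinearMap.proj i

/-- A (central) hyperplane arrangement, given by a finite set of nonzero,
pairwise non-proportional covectors (defining linear forms). -/
structure Arrangement (K : Type*) [Field K] (ℓ : ℕ) where
  hyps : Finset (Fin ℓ → K)
  ne_zero : ∀ c ∈ hyps, c ≠ 0
  nonparallel : ∀ c ∈ hyps, ∀ c' ∈ hyps, c ≠ c' → ∀ t : K, c' ≠ t • c

/-- Derivations of the polynomial ring `S`. -/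
abbrev Der (K : Type*) [Field K] (ℓ : ℕ) := Derivation K (S K ℓ) (S K ℓ)

/-- `θ` is a logarithmic derivation of the multiarrangement `(A, m)`, i.e.
`θ(α_H) ∈ α_H^{m(H)}·S` for all `H ∈ A`. -/
def IsLogDer (A : Arrangement K ℓ) (m : (Fin ℓ → K) → ℕ) (θ : Der K ℓ) : Prop :=
  ∀ c ∈ A.hyps, (linForm c) ^ (m c) ∣ θ (linForm c)

/-- `θ` is homogeneous of polynomial degree `d`: `θ(α)` is homogeneous of degree `d`
for every linear form `α`. -/
def IsHomogOfDeg (θ : Der K ℓ) (d : ℕ) : Prop :=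
  ∀ c : Fin ℓ → K, (θ (linForm c)).IsHomogeneous d

/-- `θ₁, …, θ_ℓ` form a basis of the `S`-module `D(A,m)`. -/
def IsDerBasis (A : Arrangement K ℓ) (m : (Fin ℓ → K) → ℕ) (θ : Fin ℓ → Der K ℓ) : Prop :=
  (∀ i, IsLogDer A m (θ i)) ∧
  ∀ η : Der K ℓ, IsLogDer A m η → ∃! f : Fin ℓ → S K ℓ, η = ∑ i, f i • θ i

/-- `(A,m)` is free with a homogeneous basis of degrees (exponents) `d`. -/
def IsFreeWithExp (A : Arrangement K ℓ) (m : (Fin ℓ → K) → ℕ) (d : Fin ℓ → ℕ) : Prop :=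
  ∃ θ : Fin ℓ → Der K ℓ, (∀ i, IsHomogOfDeg (θ i) (d i)) ∧ IsDerBasis A m θ

/-- `(A,m)` is a free multiarrangement. -/
def IsFree (A : Arrangement K ℓ) (m : (Fin ℓ → K) → ℕ) : Prop :=
  ∃ d : Fin ℓ → ℕ, IsFreeWithExp A m d

/-- `|m|`, the total multiplicity. -/
def msum (A : Arrangement K ℓ) (m : (Fin ℓ → K) → ℕ) : ℕ := ∑ c ∈ A.hyps, m c

/-- The rank of an arrangement: the dimension of the span of its covectors. -/
noncomputable def rank (A : Arrangement K ℓ) : ℕ :=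
  Module.finrank K (Submodule.span K (A.hyps : Set (Fin ℓ → K)))

/-- `A` is reducible: after a linear change of coordinates it is a product of two
arrangements in complementary (nonzero) subspaces.  In terms of covectors: the
covectors split between two complementary nonzero subspaces of the dual space. -/
def Reducible (A : Arrangement K ℓ) : Prop :=
  ∃ W₁ W₂ : Submodule K (Fin ℓ → K), W₁ ≠ ⊥ ∧ W₂ ≠ ⊥ ∧ W₁ ⊓ W₂ = ⊥ ∧ W₁ ⊔ W₂ = ⊤ ∧
    ∀ c ∈ A.hyps, c ∈ W₁ ∨ c ∈ W₂

/-- The hyperplanes of the localization at a flat; the flat of codimension `r` is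
encoded by the `r`-dimensional subspace `U` of the dual space spanned by the
covectors of the hyperplanes containing it. -/
noncomputable def locHyps (A : Arrangement K ℓ) (U : Submodule K (Fin ℓ → K)) :
    Finset (Fin ℓ → K) :=
  A.hyps.filter (· ∈ U)

/-- `U` encodes a flat of `A` of codimension `r` (an element of `L_r(A)`). -/
def IsFlatOfRank (A : Arrangement K ℓ) (U : Submodule K (Fin ℓ → K)) (r : ℕ) : Prop :=
  Module.finrank K U = r ∧ Submodule.span K (locHyps A U : Set (Fin ℓ → K)) = U

/-- The localization `A_X` of `A` at the flat encoded by `U`. -/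
noncomputable def localize (A : Arrangement K ℓ) (U : Submodule K (Fin ℓ → K)) :
    Arrangement K ℓ where
  hyps := locHyps A U
  ne_zero := fun c hc => A.ne_zero c (Finset.mem_filter.mp hc).1
  nonparallel := fun c hc c' hc' =>
    A.nonparallel c (Finset.mem_filter.mp hc).1 c' (Finset.mem_filter.mp hc').1

/-- `H₀` (given by covector `c₀`) is a heavy hyperplane of `(A,m)`. -/
def IsHeavy (A : Arrangement K ℓ) (m : (Fin ℓ → K) → ℕ) (c₀ : Fin ℓ → K) : Prop :=
  c₀ ∈ A.hyps ∧ (∑ c ∈ A.hyps.erase c₀, m c) ≤ m c₀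

/-- `H₀` (given by covector `c₀`) is a locally heavy hyperplane of `(A,m)`. -/
def IsLocallyHeavy (A : Arrangement K ℓ) (m : (Fin ℓ → K) → ℕ) (c₀ : Fin ℓ → K) : Prop :=
  c₀ ∈ A.hyps ∧ ∀ U : Submodule K (Fin ℓ → K), IsFlatOfRank A U 2 → c₀ ∈ U →
    3 ≤ (locHyps A U).card → (∑ c ∈ (locHyps A U).erase c₀, m c) ≤ m c₀

/-- `b` is the second Betti number of the rank-2 localization of `(A,m)` at `U`:
the product of the nonzero exponents of this free rank-2 multiarrangement. -/
def IsLocalB2 (A : Arrangement K ℓ) (m : (Fin ℓ → K) → ℕ)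
    (U : Submodule K (Fin ℓ → K)) (b : ℕ) : Prop :=
  ∃ d : Fin ℓ → ℕ, IsFreeWithExp (localize A U) m d ∧
    b = ∏ i ∈ Finset.univ.filter (fun i => d i ≠ 0), d i

/-- `b` is the second Betti number `b₂(A,m)` of the multiarrangement `(A,m)`. -/
def IsB2 (A : Arrangement K ℓ) (m : (Fin ℓ → K) → ℕ) (b : ℕ) : Prop :=
  ∃ bloc : Submodule K (Fin ℓ → K) → ℕ,
    (∀ U, IsFlatOfRank A U 2 → IsLocalB2 A m U (bloc U)) ∧
    b = ∑ᶠ U ∈ {U : Submodule K (Fin ℓ → K) | IsFlatOfRank A U 2}, bloc U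

/-- The second Betti number of a simple arrangement:
`b₂(A) = Σ_{X ∈ L₂(A)} (|A_X| - 1)`. -/
noncomputable def b2Simple (A : Arrangement K ℓ) : ℕ :=
  ∑ᶠ U ∈ {U : Submodule K (Fin ℓ → K) | IsFlatOfRank A U 2}, ((locHyps A U).card - 1)

/-- The Euler–Ziegler multiplicity of the restricted hyperplane `H₀ ∩ ker(c)` of
`A^{H₀}`: `m^{H₀}(X) = |m_X| - m(H₀)`. -/
noncomputable def EZmult (A : Arrangement K ℓ) (m : (Fin ℓ → K) → ℕ)
    (c₀ c : Fin ℓ → K) : ℕ :=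
  (∑ c' ∈ A.hyps.filter (· ∈ Submodule.span K ({c₀, c} : Set (Fin ℓ → K))), m c') - m c₀

/-- Two covectors are parallel (define the same hyperplane). -/
def Parallel {n : ℕ} (b b' : Fin n → K) : Prop := ∃ t : K, t ≠ 0 ∧ b' = t • b

/-- The covector on `K^n` obtained by restricting the covector `c` on `K^{n+1}` to the
hyperplane `ker c₀`, transported by the linear isomorphism `e : ker c₀ ≃ K^n`. -/
noncomputable def resCov {n : ℕ} (c₀ : Fin (n+1) → K)
    (e : ↥(LinearMap.ker (toFunc c₀)) ≃ₗ[K] (Fin n → K)) (c : Fin (n+1) → K) :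
    Fin n → K :=
  fun j => toFunc c ((e.symm (Pi.single j 1) : ↥(LinearMap.ker (toFunc c₀))) : Fin (n+1) → K)

/-- `(B, mB)` is (a model, in coordinates, of) the Euler–Ziegler restriction
`(A^{H₀}, m^{H₀})` of `(A,m)` to the hyperplane `H₀ = ker c₀ ∈ A`. -/
def IsEZRes {n : ℕ} (A : Arrangement K (n+1)) (m : (Fin (n+1) → K) → ℕ)
    (c₀ : Fin (n+1) → K) (B : Arrangement K n) (mB : (Fin n → K) → ℕ) : Prop :=
  c₀ ∈ A.hyps ∧
  ∃ e : ↥(LinearMap.ker (toFunc c₀)) ≃ₗ[K] (Fin n → K),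
    (∀ c ∈ A.hyps.erase c₀, ∃ b ∈ B.hyps,
        Parallel b (resCov c₀ e c) ∧ mB b = EZmult A m c₀ c) ∧
    (∀ b ∈ B.hyps, ∃ c ∈ A.hyps.erase c₀, Parallel b (resCov c₀ e c))

/-- A combinatorial equivalence between two arrangements: a bijection between the
hyperplanes inducing an isomorphism of intersection lattices (it preserves the rank
of every subset of hyperplanes). -/
def CombEquiv (A A' : Arrangement K ℓ) : Prop :=
  ∃ φ : (Fin ℓ → K) → (Fin ℓ → K), Set.BijOn φ ↑A.hyps ↑A'.hyps ∧
    ∀ T : Finset (Fin ℓ → K), T ⊆ A.hyps →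
      Module.finrank K (Submodule.span K (T : Set (Fin ℓ → K))) =
      Module.finrank K (Submodule.span K ((T.image φ) : Set (Fin ℓ → K)))


/-! ### Auxiliary lemmas -/

lemma coeff_linForm (c : Fin ℓ → K) (j : Fin ℓ) :
    MvPolynomial.coeff (Finsupp.single j 1) (linForm c) = c j := by
  classical
  rw [linForm, MvPolynomial.coeff_sum]
  rw [Finset.sum_eq_single j]
  · simp [MvPolynomial.coeff_C_mul, MvPolynomial.coeff_X]
  · intro i _ hij
    simp [MvPolynomial.coeff_C_mul, MvPolynomial.coeff_X',
      Finsupp.single_eq_single_iff, hij]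
  · simp

lemma linForm_inj : Function.Injective (linForm (K := K) (ℓ := ℓ)) := by
  intro a b h
  funext j
  rw [← coeff_linForm a j, ← coeff_linForm b j, h]

lemma linForm_zero : linForm (0 : Fin ℓ → K) = 0 := by simp [linForm]

lemma isHomogeneous_linForm (c : Fin ℓ → K) : (linForm c).IsHomogeneous 1 := by
  apply MvPolynomial.IsHomogeneous.sum
  intro i _
  have h1 : (MvPolynomial.C (c i) : S K ℓ).IsHomogeneous 0 :=
    MvPolynomial.isHomogeneous_C _ _
  have h2 : (MvPolynomial.X i : S K ℓ).IsHomogeneous 1 :=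
    MvPolynomial.isHomogeneous_X _ _
  simpa using h1.mul h2

lemma degree_one_eq_single {s : Fin ℓ →₀ ℕ} (hs : s.degree = 1) :
    ∃ i, s = Finsupp.single i 1 := by
  classical
  have hne : s ≠ 0 := by
    intro h; rw [h] at hs; simp [Finsupp.degree] at hs
  obtain ⟨i, hi⟩ := Finsupp.support_nonempty_iff.mpr hne
  have hsum : s.degree = s i + ∑ j ∈ s.support.erase i, s j := by
    rw [Finsupp.degree_apply, ← Finset.add_sum_erase _ _ hi]
  have hsi : 1 ≤ s i := Nat.one_le_iff_ne_zero.mpr (Finsupp.mem_support_iff.mp hi)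
  have hrest : ∑ j ∈ s.support.erase i, s j = 0 ∧ s i = 1 := by omega
  refine ⟨i, ?_⟩
  ext j
  by_cases hj : j = i
  · simp [hj, hrest.2]
  · rw [Finsupp.single_apply, if_neg (Ne.symm hj)]
    by_cases hjs : s j = 0
    · exact hjs
    · exfalso
      have hmem : j ∈ s.support.erase i := by
        simp [Finset.mem_erase, hj, Finsupp.mem_support_iff, hjs]
      exact hjs ((Finset.sum_eq_zero_iff.mp hrest.1) j hmem)

lemma eq_linForm_of_isHomogeneous_one {p : S K ℓ} (hp : p.IsHomogeneous 1) :
    p = linForm (fun j => MvPolynomial.coeff (Finsupp.single j 1) p) := by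
  classical
  apply MvPolynomial.ext
  intro s
  by_cases hs : s.degree = 1
  · obtain ⟨i, rfl⟩ := degree_one_eq_single hs
    rw [coeff_linForm]
  · rw [hp.coeff_eq_zero hs, ((isHomogeneous_linForm _).coeff_eq_zero hs)]

lemma hom_dvd_struct {g p : S K ℓ} {k d : ℕ}
    (hg : g.IsHomogeneous k) (hp : p.IsHomogeneous d) (h : g ∣ p) :
    ∃ q : S K ℓ, q.IsHomogeneous (d - k) ∧ p = g * q ∧ (d < k → p = 0) := by
  classical
  obtain ⟨h0, rfl⟩ := h
  set N := h0.totalDegree + 1 with hN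
  have hsum : g * h0 = ∑ j ∈ Finset.range N, g * MvPolynomial.homogeneousComponent j h0 := by
    rw [← Finset.mul_sum, MvPolynomial.sum_homogeneousComponent]
  have hterm : ∀ j, MvPolynomial.homogeneousComponent d
        (g * MvPolynomial.homogeneousComponent j h0)
      = if d = k + j then g * MvPolynomial.homogeneousComponent j h0 else 0 := by
    intro j
    exact MvPolynomial.homogeneousComponent_of_mem
      ((MvPolynomial.mem_homogeneousSubmodule _ _).mpr
        (hg.mul (MvPolynomial.homogeneousComponent_isHomogeneous j h0)))
  have hphp : MvPolynomial.homogeneousComponent d (g * h0) = g * h0 := by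
    have := MvPolynomial.homogeneousComponent_of_mem
      ((MvPolynomial.mem_homogeneousSubmodule _ _).mpr hp) (m := d)
    simpa using this
  have key : g * h0 = ∑ j ∈ Finset.range N,
      if d = k + j then g * MvPolynomial.homogeneousComponent j h0 else 0 := by
    conv_lhs => rw [← hphp]
    rw [hsum, map_sum]
    exact Finset.sum_congr rfl fun j _ => hterm j
  by_cases hdk : d < k
  · have hzero : g * h0 = 0 := by
      rw [key]
      apply Finset.sum_eq_zero
      intro j _
      rw [if_neg]; omega
    exact ⟨0, MvPolynomial.isHomogeneous_zero _ _ _, by rw [hzero, mul_zero], fun _ => hzero⟩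
  · push_neg at hdk
    have hiff : ∀ j, (d = k + j) ↔ (j = d - k) := by omega
    have key2 : g * h0 = if d - k ∈ Finset.range N
        then g * MvPolynomial.homogeneousComponent (d - k) h0 else 0 := by
      rw [key]
      simp_rw [hiff]
      exact Finset.sum_ite_eq' _ _ _
    by_cases hmem : d - k ∈ Finset.range N
    · rw [if_pos hmem] at key2
      exact ⟨_, MvPolynomial.homogeneousComponent_isHomogeneous _ _, key2, fun h => by omega⟩
    · rw [if_neg hmem] at key2
      exact ⟨0, MvPolynomial.isHomogeneous_zero _ _ _, by rw [key2, mul_zero], fun h => by omega⟩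

/-- `linForm` as a linear map. -/
noncomputable def linFormL : (Fin ℓ → K) →ₗ[K] S K ℓ where
  toFun := linForm
  map_add' a b := by
    simp [linForm, map_add, add_mul, Finset.sum_add_distrib]
  map_smul' t a := by
    simp only [linForm, RingHom.id_apply, Finset.smul_sum, Pi.smul_apply, smul_eq_mul, map_mul]
    refine Finset.sum_congr rfl fun i _ => ?_
    rw [MvPolynomial.smul_eq_C_mul, mul_assoc]

@[simp] lemma linFormL_apply (c : Fin ℓ → K) : linFormL c = linForm c := rfl

lemma linForm_smul (t : K) (c : Fin ℓ → K) :
    linForm (t • c) = MvPolynomial.C t * linForm c := by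
  rw [← linFormL_apply, map_smul, linFormL_apply, MvPolynomial.smul_eq_C_mul]

lemma linForm_single (j : Fin ℓ) :
    linForm (Pi.single j 1 : Fin ℓ → K) = MvPolynomial.X j := by
  classical
  rw [linForm, Finset.sum_eq_single j]
  · simp
  · intro i _ hij; simp [Pi.single_apply, hij]
  · simp

/-- The endomorphism of covector space induced by a derivation (meaningful in degree 1). -/
noncomputable def philin (θ : Der K ℓ) : Module.End K (Fin ℓ → K) :=
  (LinearMap.pi fun j => MvPolynomial.lcoeff K (Finsupp.single j 1)).comp
    (θ.toLinearMap.comp linFormL)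

lemma philin_apply (θ : Der K ℓ) (c : Fin ℓ → K) (j : Fin ℓ) :
    philin θ c j = MvPolynomial.coeff (Finsupp.single j 1) (θ (linForm c)) := rfl

lemma eigen_pow (f : Module.End K (Fin ℓ → K)) (c : Fin ℓ → K) (t : K)
    (h : f c = t • c) (n : ℕ) : (f ^ n) c = t ^ n • c := by
  induction n with
  | zero => simp
  | succ n ih =>
    rw [pow_succ, Module.End.mul_apply, h, map_smul, ih, smul_smul, ← pow_succ']

theorem stmt1 (A : Arrangement K ℓ) (m : (Fin ℓ → K) → ℕ)
    (hm : ∀ c ∈ A.hyps, 0 < m c) (hm1 : ∃ c ∈ A.hyps, m c ≠ 1)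
    (hA : ¬ Reducible A) (θ : Der K ℓ) (d : ℕ)
    (hθ : IsLogDer A m θ) (hhom : IsHomogOfDeg θ d) (hne : θ ≠ 0) : 2 ≤ d := by
  by_contra hd2
  push_neg at hd2
  obtain ⟨c₀, hc₀A, hc₀m⟩ := hm1
  have hmc₀ : 2 ≤ m c₀ := by have := hm c₀ hc₀A; omega
  have hc₀ne : c₀ ≠ 0 := A.ne_zero c₀ hc₀A
  -- any hyperplane of multiplicity exceeding d kills θ
  have key0 : ∀ c ∈ A.hyps, d < m c → θ (linForm c) = 0 := by
    intro c hc hdm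
    have hg : ((linForm c) ^ (m c)).IsHomogeneous (m c) := by
      simpa using (isHomogeneous_linForm c).pow (m c)
    obtain ⟨q, -, -, h0⟩ := hom_dvd_struct hg (hhom c) (hθ c hc)
    exact h0 hdm
  -- closing argument when θ kills all defining forms
  have allzero : (∀ c ∈ A.hyps, θ (linForm c) = 0) → False := by
    intro hz
    by_cases hspan : Submodule.span K ((A.hyps : Set (Fin ℓ → K))) = ⊤
    · have hL : (θ.toLinearMap.comp linFormL : (Fin ℓ → K) →ₗ[K] S K ℓ) = 0 := by
        apply LinearMap.ext_on hspan
        intro x hx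
        simpa using hz x hx
      have hXz : ∀ j, θ (MvPolynomial.X j) = 0 := by
        intro j
        have := LinearMap.ext_iff.mp hL (Pi.single j 1)
        simpa [linForm_single] using this
      exact hne (MvPolynomial.derivation_ext fun i => by simp [hXz i])
    · apply hA
      obtain ⟨W₂, hcompl⟩ :=
        Submodule.exists_isCompl (Submodule.span K ((A.hyps : Set (Fin ℓ → K))))
      refine ⟨_, W₂, ?_, ?_, disjoint_iff.mp hcompl.disjoint,
        codisjoint_iff.mp hcompl.codisjoint, fun c hc => Or.inl (Submodule.subset_span hc)⟩
      · intro hbot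
        have : c₀ ∈ (⊥ : Submodule K (Fin ℓ → K)) := hbot ▸ Submodule.subset_span hc₀A
        exact hc₀ne ((Submodule.mem_bot K).mp this)
      · intro hbot
        apply hspan
        have := codisjoint_iff.mp hcompl.codisjoint
        rwa [hbot, sup_bot_eq] at this
  interval_cases d
  · exact allzero fun c hc => key0 c hc (hm c hc)
  · -- degree 1 case
    set φ := philin θ with hφdef
    have hφ : ∀ c, θ (linForm c) = linForm (φ c) := by
      intro c
      rw [eq_linForm_of_isHomogeneous_one (hhom c)]
      congr 1
    have ht : ∀ c ∈ A.hyps, ∃ t : K, φ c = t • c := by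
      intro c hc
      rcases Nat.lt_or_ge 1 (m c) with h2 | h1
      · refine ⟨0, ?_⟩
        have h0 := key0 c hc h2
        rw [hφ c] at h0
        have := linForm_inj (K := K) (ℓ := ℓ) (a₁ := φ c) (a₂ := 0) (by rw [h0, linForm_zero])
        rw [this, zero_smul]
      · have hmc : m c = 1 := le_antisymm h1 (hm c hc)
        have hdvd : linForm c ∣ θ (linForm c) := by
          have := hθ c hc; rwa [hmc, pow_one] at this
        obtain ⟨q, hq0, hpq, -⟩ :=
          hom_dvd_struct (isHomogeneous_linForm c) (hhom c) hdvd
        have hqC : q = MvPolynomial.C (MvPolynomial.coeff 0 q) := by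
          have h1' := MvPolynomial.homogeneousComponent_of_mem
            ((MvPolynomial.mem_homogeneousSubmodule _ _).mpr hq0) (m := 0)
          rw [if_pos rfl] at h1'
          conv_lhs => rw [← h1']
          rw [MvPolynomial.homogeneousComponent_zero]
        refine ⟨MvPolynomial.coeff 0 q, ?_⟩
        apply linForm_inj
        rw [← hφ c, linForm_smul, hpq, mul_comm (linForm c) q, ← hqC]
    have hφc₀ : φ c₀ = 0 := by
      apply linForm_inj
      rw [← hφ c₀, key0 c₀ hc₀A (by omega), linForm_zero]
    have hl1 : 1 ≤ ℓ := by
      rcases Nat.eq_zero_or_pos ℓ with h | h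
      · exfalso; apply hc₀ne; subst h; funext i; exact i.elim0
      · exact h
    have hnl : Module.finrank K (Fin ℓ → K) = ℓ := Module.finrank_fin_fun K
    set n := Module.finrank K (Fin ℓ → K) with hn
    set W₁ := LinearMap.ker (φ ^ n) with hW₁def
    set W₂ := LinearMap.range (φ ^ n) with hW₂def
    obtain ⟨k, hk⟩ : ∃ k, n = k + 1 := ⟨n - 1, by omega⟩
    have hc₀W₁ : c₀ ∈ W₁ := by
      rw [hW₁def, LinearMap.mem_ker, hk, pow_succ, Module.End.mul_apply, hφc₀, map_zero]
    have hW₁ne : W₁ ≠ ⊥ := by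
      intro h
      rw [h] at hc₀W₁
      exact hc₀ne ((Submodule.mem_bot K).mp hc₀W₁)
    by_cases hW₂ : W₂ = ⊥
    · apply allzero
      intro c hc
      obtain ⟨t, htc⟩ := ht c hc
      have htz : t = 0 := by
        by_contra htne
        have hcW₂ : c ∈ W₂ := ⟨(t ^ n)⁻¹ • c, by
          rw [map_smul, eigen_pow φ c t htc n, smul_smul,
            inv_mul_cancel₀ (pow_ne_zero n htne), one_smul]⟩
        rw [hW₂] at hcW₂
        exact A.ne_zero c hc ((Submodule.mem_bot K).mp hcW₂)
      rw [hφ c, htc, htz, zero_smul, linForm_zero]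
    · apply hA
      have hdisj : W₁ ⊓ W₂ = ⊥ := by
        rw [eq_bot_iff]
        rintro v hv
        obtain ⟨hv1, hv2⟩ := Submodule.mem_inf.mp hv
        obtain ⟨u, hu⟩ := hv2
        have hu2 : u ∈ LinearMap.ker (φ ^ (n + n)) := by
          rw [LinearMap.mem_ker, pow_add, Module.End.mul_apply, hu]
          exact hv1
        have hker : LinearMap.ker (φ ^ (n + n)) = LinearMap.ker (φ ^ n) := by
          rw [Module.End.ker_pow_eq_ker_pow_finrank_of_le (by omega)]
        rw [hker, LinearMap.mem_ker] at hu2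
        rw [Submodule.mem_bot, ← hu, hu2]
      refine ⟨W₁, W₂, hW₁ne, hW₂, hdisj, ?_, ?_⟩
      · apply Submodule.eq_top_of_finrank_eq
        have h1 := Submodule.finrank_sup_add_finrank_inf_eq W₁ W₂
        have h2 := LinearMap.finrank_range_add_finrank_ker (φ ^ n)
        rw [← hW₂def, ← hW₁def] at h2
        rw [hdisj] at h1
        simp only [finrank_bot, add_zero] at h1
        omega
      · intro c hc
        obtain ⟨t, htc⟩ := ht c hc
        by_cases htz : t = 0
        · left
          rw [hW₁def, LinearMap.mem_ker, eigen_pow φ c t htc n, htz, hk,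
            zero_pow (by omega : k + 1 ≠ 0), zero_smul]
        · right
          exact ⟨(t ^ n)⁻¹ • c, by
            rw [map_smul, eigen_pow φ c t htc n, smul_smul,
              inv_mul_cancel₀ (pow_ne_zero n htz), one_smul]⟩


end ArrPaper
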